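/- For any A ∈ ℤ^{d×n} and b ∈ ℂⁿ, the Lissajous variety ℒ_{A,b} ⊆ ℂⁿ equals the image of the variety 𝒴_{A,b} under the coordinate projection π_{A,b} : 𝒴_{A,b} → ℂⁿ, (x,y) ↦ x. -/

import Mathlib

noncomputable section


/-- A subset of `ℂⁿ` is Zariski closed if it is the common zero locus
of a set of polynomials. -/
def ZClosed {n : ℕ} (S : Set (Fin n → ℂ)) : Prop :=
  ∃ I : Set (MvPolynomial (Fin n) ℂ),
    S = {x | ∀ p ∈ I, MvPolynomial.eval x p = 0}

/-- Irreducibility with respect to the Zariski topology on `ℂⁿ`. -/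
def ZIrred {n : ℕ} (S : Set (Fin n → ℂ)) : Prop :=
  S.Nonempty ∧ ∀ F G : Set (Fin n → ℂ), ZClosed F → ZClosed G →
    S ⊆ F ∪ G → (S ⊆ F ∨ S ⊆ G)

/-- Dimension of a subset of `ℂⁿ`: Krull dimension of the poset of irreducible
Zariski closed subsets contained in it. -/
def ZDim {n : ℕ} (S : Set (Fin n → ℂ)) : WithBot ℕ∞ :=
  Order.krullDim {T : Set (Fin n → ℂ) // ZClosed T ∧ ZIrred T ∧ T ⊆ S}

/-- Zariski closure in `ℂⁿ`. -/
def ZClosure {n : ℕ} (S : Set (Fin n → ℂ)) : Set (Fin n → ℂ) :=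
  ⋂₀ {F | ZClosed F ∧ S ⊆ F}

/-- A property `P` of points of `ℂ^σ` holds generically if it holds on the
nonvanishing locus of some nonzero polynomial. -/
def GenericProp {σ : Type} (P : (σ → ℂ) → Prop) : Prop :=
  ∃ p : MvPolynomial σ ℂ, p ≠ 0 ∧ ∀ x : σ → ℂ, MvPolynomial.eval x p ≠ 0 → P x

/-- `S ⊆ ℂⁿ` (of dimension `d`) has degree `k`: a generic affine-linear subspace of
codimension `d` meets `S` in exactly `k` points. -/
def HasVarietyDegree {n : ℕ} (S : Set (Fin n → ℂ)) (d k : ℕ) : Prop :=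
  GenericProp (σ := Fin d × Option (Fin n)) fun c =>
    ({x ∈ S | ∀ j : Fin d, c (j, none) + ∑ i : Fin n, c (j, some i) * x i = 0}).ncard = k

/-- The ℂ-linear span of the rows of an integer matrix `A`. -/
def rowSpanC {d n : ℕ} (A : Matrix (Fin d) (Fin n) ℤ) : Submodule ℂ (Fin n → ℂ) :=
  Submodule.span ℂ (Set.range fun i : Fin d => fun j : Fin n => (A i j : ℂ))

/-- The Lissajous variety `ℒ_{A,b} = cos(Row(A) - bπ/2)`. -/
def Lissajous {d n : ℕ} (A : Matrix (Fin d) (Fin n) ℤ) (b : Fin n → ℂ) :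
    Set (Fin n → ℂ) :=
  (fun x j => Complex.cos (x j)) ''
    {y | ∃ x ∈ rowSpanC A, y = x - ((Real.pi : ℂ) / 2) • b}

/-- `β_ℓ = exp(-i b_ℓ π / 2)`. -/
def betaOf {n : ℕ} (b : Fin n → ℂ) : Fin n → ℂ :=
  fun ℓ => Complex.exp (-(Complex.I * b ℓ * ((Real.pi : ℂ) / 2)))

/-- The trigonometric parametrization `φ_{A,b}` of the Lissajous variety. -/
def phiMap {d n : ℕ} (A : Matrix (Fin d) (Fin n) ℤ) (b : Fin n → ℂ) (t : Fin d → ℂ) :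
    Fin n → ℂ :=
  fun ℓ => Complex.cos ((∑ i, (A i ℓ : ℂ) * t i) - b ℓ * ((Real.pi : ℂ) / 2))

/-- The rational parametrization `ψ_{A,b}` of the Lissajous variety. -/
def psiMap {d n : ℕ} (A : Matrix (Fin d) (Fin n) ℤ) (b : Fin n → ℂ) (v : Fin d → ℂ) :
    Fin n → ℂ :=
  fun ℓ => (betaOf b ℓ * ∏ k, v k ^ (A k ℓ) + (betaOf b ℓ)⁻¹ * ∏ k, v k ^ (-(A k ℓ))) / 2

/-- The image of the algebraic torus under the monomial map of `A`. -/
def torusImage {d n : ℕ} (A : Matrix (Fin d) (Fin n) ℤ) : Set (Fin n → ℂ) :=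
  (fun v : Fin d → ℂ => fun ℓ : Fin n => ∏ k, v k ^ (A k ℓ)) '' {v | ∀ k, v k ≠ 0}

/-- The affine toric variety `Y_A`. -/
def YA {d n : ℕ} (A : Matrix (Fin d) (Fin n) ℤ) : Set (Fin n → ℂ) :=
  ZClosure (torusImage A)

/-- The scaled toric variety `Y_{A,β}`. -/
def YAbeta {d n : ℕ} (A : Matrix (Fin d) (Fin n) ℤ) (β : Fin n → ℂ) : Set (Fin n → ℂ) :=
  (fun y ℓ => β ℓ * y ℓ) '' YA A

/-- The incidence variety `𝒴_{A,b} ⊆ ℂⁿ × (ℂ*)ⁿ`. -/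
def YcalAb {d n : ℕ} (A : Matrix (Fin d) (Fin n) ℤ) (b : Fin n → ℂ) :
    Set ((Fin n → ℂ) × (Fin n → ℂ)) :=
  {p | (∀ j, p.2 j ≠ 0) ∧ p.2 ∈ YAbeta A (betaOf b) ∧
    ∀ j, p.1 j = (p.2 j + (p.2 j)⁻¹) / 2}

/-- The coordinate projection `Y → S` has degree `e`: the fiber over a generic point
of `S` (i.e. outside a proper Zariski closed subset) has exactly `e` points. -/
def HasFiberDegree {n : ℕ} (Y : Set ((Fin n → ℂ) × (Fin n → ℂ)))
    (S : Set (Fin n → ℂ)) (e : ℕ) : Prop :=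
  ∃ U : Set (Fin n → ℂ), ZClosed U ∧ ¬ S ⊆ U ∧
    ∀ x ∈ S \ U, ({p ∈ Y | p.1 = x}).ncard = e

/-- The index `[ℤ^d : ℤA]` of the lattice generated by the columns of `A`. -/
def latticeIndex {d n : ℕ} (A : Matrix (Fin d) (Fin n) ℤ) : ℕ :=
  (Submodule.span ℤ (Set.range fun j : Fin n => fun i : Fin d => A i j)).toAddSubgroup.index

/-- Linear map `c ↦ ∑ (c j : ℂ) * v j` from `ℤⁿ` to `ℂ`. -/
def pairWith {n : ℕ} (v : Fin n → ℂ) : (Fin n → ℤ) →ₗ[ℤ] ℂ where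
  toFun c := ∑ j, (c j : ℂ) * v j
  map_add' c c' := by
    simp only [Pi.add_apply, Int.cast_add]
    rw [← Finset.sum_add_distrib]
    congr 1; ext j; ring
  map_smul' a c := by
    simp only [Pi.smul_apply, smul_eq_mul, Int.cast_mul, zsmul_eq_mul, Finset.mul_sum]
    simp only [RingHom.id_apply]
    congr 1; ext j; push_cast; ring

@[simp] lemma pairWith_apply {n : ℕ} (v : Fin n → ℂ) (c : Fin n → ℤ) :
    pairWith v c = ∑ j, (c j : ℂ) * v j := rfl

lemma pairWith_single {n : ℕ} (v : Fin n → ℂ) (j : Fin n) :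
    pairWith v (Pi.single j 1) = v j := by
  simp [Pi.single_apply, Finset.sum_ite_eq]

/-- Every `ℤ`-linear map from a submodule of `ℤᵏ` to `ℂ` extends to `ℤᵏ`;
if the submodule is saturated and the map takes values in `zmultiples z`, so does
the extension. -/
lemma exists_extend {k : ℕ} (N : Submodule ℤ (Fin k → ℤ)) (g : N →ₗ[ℤ] ℂ) :
    ∃ G : (Fin k → ℤ) →ₗ[ℤ] ℂ, (∀ x : N, G x = g x) ∧
      ∀ z : ℂ, (∀ (a : ℤ) (x : Fin k → ℤ), a ≠ 0 → a • x ∈ N → x ∈ N) →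
        (∀ x : N, g x ∈ AddSubgroup.zmultiples z) →
        ∀ x, G x ∈ AddSubgroup.zmultiples z := by
  classical
  obtain ⟨m, snf⟩ := N.smithNormalForm (Pi.basisFun ℤ (Fin k))
  have ha : ∀ i, snf.a i ≠ 0 := by
    intro i h
    have h2 := snf.snf i
    rw [h, zero_smul] at h2
    exact snf.bN.ne_zero i (Subtype.coe_injective (by simpa using h2))
  have haC : ∀ i, (snf.a i : ℂ) ≠ 0 := fun i => Int.cast_ne_zero.mpr (ha i)
  set h : Fin m → ℂ := fun i => g (snf.bN i) / (snf.a i : ℂ) with hh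
  set G : (Fin k → ℤ) →ₗ[ℤ] ℂ := snf.bM.constr ℤ (Function.extend snf.f h 0) with hG
  have hGbM : ∀ i : Fin m, G (snf.bM (snf.f i)) = h i := by
    intro i
    rw [hG, Module.Basis.constr_basis, snf.f.injective.extend_apply]
  have hagree : ∀ x : N, G x = g x := by
    have : G.comp N.subtype = g := by
      apply snf.bN.ext
      intro i
      have h1 : (N.subtype (snf.bN i) : Fin k → ℤ) = snf.a i • snf.bM (snf.f i) := snf.snf i
      simp only [LinearMap.comp_apply, h1]
      rw [map_smul, hGbM, hh]
      simp only [zsmul_eq_mul]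
      rw [mul_comm, div_mul_cancel₀ _ (haC i)]
    intro x
    rw [← this]; rfl
  refine ⟨G, hagree, ?_⟩
  intro z hsat hmul x
  have hbasis : ∀ j : Fin k, G (snf.bM j) ∈ AddSubgroup.zmultiples z := by
    intro j
    by_cases hj : j ∈ Set.range snf.f
    · obtain ⟨i, rfl⟩ := hj
      rw [hGbM]
      have hmem : snf.bM (snf.f i) ∈ N := by
        apply hsat (snf.a i) _ (ha i)
        rw [← snf.snf i]; exact (snf.bN i).2
      have : (snf.bN i : Fin k → ℤ) = ((snf.a i • ⟨_, hmem⟩ : N) : Fin k → ℤ) := by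
        rw [snf.snf i]; rfl
      have h3 : g (snf.bN i) = (snf.a i : ℂ) * g ⟨snf.bM (snf.f i), hmem⟩ := by
        rw [show snf.bN i = (snf.a i • (⟨snf.bM (snf.f i), hmem⟩ : N)) from
          Subtype.coe_injective this, map_smul, zsmul_eq_mul]
      rw [hh]
      simp only [h3]
      rw [mul_div_cancel_left₀ _ (haC i)]
      exact hmul _
    · rw [hG, Module.Basis.constr_basis, Function.extend_apply' _ _ _ hj]
      simp only [Pi.zero_apply]
      exact zero_mem _
  have hx : x = ∑ j, (snf.bM.repr x j) • snf.bM j := (snf.bM.sum_repr x).symm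
  rw [hx, map_sum]
  exact AddSubgroup.sum_mem _ fun j _ => by
    rw [map_smul]; exact AddSubgroup.zsmul_mem _ (hbasis j) _

lemma torusImage_subset_YA {d n : ℕ} (A : Matrix (Fin d) (Fin n) ℤ) :
    torusImage A ⊆ YA A := fun _ hy => Set.mem_sInter.mpr fun _ hF => hF.2 hy

lemma zpow_sum₀' {x : ℂ} (hx : x ≠ 0) {ι : Type*} (s : Finset ι) (e : ι → ℤ) :
    x ^ (∑ i ∈ s, e i) = ∏ i ∈ s, x ^ e i := by
  classical
  induction s using Finset.induction_on with
  | empty => simp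
  | insert _ _ hns ih =>
    rw [Finset.sum_insert hns, Finset.prod_insert hns, zpow_add₀ hx, ih]

/-- A linear functional `G : ℤᵏ → ℂ` is determined by its values on `Pi.single`s. -/
lemma linearMap_eq_sum_single {k : ℕ} (G : (Fin k → ℤ) →ₗ[ℤ] ℂ) (c : Fin k → ℤ) :
    G c = ∑ j, (c j : ℂ) * G (Pi.single j 1) := by
  have hc : c = ∑ j, (c j) • Pi.single j (1 : ℤ) := by
    funext i
    rw [Finset.sum_apply]
    simp only [Pi.smul_apply, smul_eq_mul]
    rw [Finset.sum_eq_single i]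
    · simp
    · intro j _ hj; simp [Pi.single_apply, hj]
    · simp
  conv_lhs => rw [hc]
  rw [map_sum]
  congr 1; funext j
  rw [map_smul, zsmul_eq_mul]

/-- If `u` pairs to zero with every integer vector in the kernel of `A`,
then `u` lies in the complex row span of `A`. -/
lemma mem_rowSpan_of_perp {d n : ℕ} (A : Matrix (Fin d) (Fin n) ℤ) (u : Fin n → ℂ)
    (hu : ∀ c : Fin n → ℤ, A.mulVec c = 0 → ∑ j, (c j : ℂ) * u j = 0) :
    u ∈ rowSpanC A := by
  classical
  set f : (Fin n → ℤ) →ₗ[ℤ] (Fin d → ℤ) := Matrix.mulVecLin A with hf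
  have hker : LinearMap.ker f ≤ LinearMap.ker (pairWith u) := by
    intro c hc
    rw [LinearMap.mem_ker] at hc ⊢
    rw [pairWith_apply]
    exact hu c hc
  set ψ : LinearMap.range f →ₗ[ℤ] ℂ :=
    ((LinearMap.ker f).liftQ (pairWith u) hker).comp
      (f.quotKerEquivRange.symm : LinearMap.range f →ₗ[ℤ] (Fin n → ℤ) ⧸ LinearMap.ker f)
    with hψ
  have hψf : ∀ c : Fin n → ℤ, ψ ⟨f c, LinearMap.mem_range_self f c⟩ = pairWith u c := by
    intro c
    rw [hψ]
    simp only [LinearMap.comp_apply, LinearEquiv.coe_coe]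
    rw [f.quotKerEquivRange_symm_apply_image]
    exact Submodule.liftQ_apply _ _ _
  obtain ⟨Ψ, hΨ, -⟩ := exists_extend (LinearMap.range f) ψ
  rw [rowSpanC, Submodule.mem_span_range_iff_exists_fun]
  refine ⟨fun i => Ψ (Pi.single i 1), ?_⟩
  funext j
  have h1 : u j = Ψ (f (Pi.single j 1)) := by
    rw [hΨ ⟨f (Pi.single j 1), LinearMap.mem_range_self f _⟩, hψf, pairWith_single]
  have h2 : f (Pi.single j 1) = fun i => A i j := by
    rw [hf]
    simp only [Matrix.mulVecLin_apply]
    rw [Matrix.mulVec_single]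
    funext i; simp
  rw [Finset.sum_apply]
  simp only [Pi.smul_apply, smul_eq_mul]
  rw [h1, h2, linearMap_eq_sum_single]
  congr 1; funext i; ring

lemma prod_zpow_eq_one {d n : ℕ} (A : Matrix (Fin d) (Fin n) ℤ) (w : Fin n → ℂ)
    (hw : w ∈ YA A) (hw0 : ∀ j, w j ≠ 0) (c : Fin n → ℤ) (hc : A.mulVec c = 0) :
    ∏ j, w j ^ (c j) = 1 := by
  classical
  set cp : Fin n → ℕ := fun j => (c j).toNat with hcp
  set cm : Fin n → ℕ := fun j => (-(c j)).toNat with hcm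
  have hcd : ∀ j, (cp j : ℤ) - (cm j : ℤ) = c j := by
    intro j; rw [hcp, hcm]; simp only [Int.toNat_of_nonneg]; omega
  set P : MvPolynomial (Fin n) ℂ :=
    (∏ j, MvPolynomial.X j ^ (cp j)) - ∏ j, MvPolynomial.X j ^ (cm j) with hP
  have hprod : ∀ (v : Fin d → ℂ), (∀ k, v k ≠ 0) → ∀ m : Fin n → ℕ,
      (∏ ℓ, (∏ k, v k ^ (A k ℓ)) ^ (m ℓ)) =
        ∏ k, v k ^ (∑ ℓ, A k ℓ * (m ℓ : ℤ)) := by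
    intro v hv m
    have : ∀ ℓ, (∏ k, v k ^ (A k ℓ)) ^ (m ℓ) = ∏ k, v k ^ (A k ℓ * (m ℓ : ℤ)) := by
      intro ℓ
      rw [← Finset.prod_pow]
      congr 1; funext k
      rw [← zpow_natCast (v k ^ (A k ℓ)) (m ℓ), ← zpow_mul]
    rw [Finset.prod_congr rfl fun ℓ _ => this ℓ, Finset.prod_comm]
    congr 1; funext k
    rw [zpow_sum₀' (hv k)]
  have hvan : ∀ y ∈ torusImage A, MvPolynomial.eval y P = 0 := by
    rintro y ⟨v, hv, rfl⟩
    rw [hP]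
    simp only [map_sub, map_prod, map_pow, MvPolynomial.eval_X]
    rw [sub_eq_zero, hprod v hv cp, hprod v hv cm]
    congr 1; funext k
    congr 1
    have h0 : ∑ ℓ, A k ℓ * c ℓ = 0 := congrFun hc k
    have hterm : ∀ ℓ, A k ℓ * (cp ℓ : ℤ) - A k ℓ * (cm ℓ : ℤ) = A k ℓ * c ℓ := by
      intro ℓ; rw [← mul_sub, hcd]
    have h1 : ∑ ℓ, (A k ℓ * (cp ℓ : ℤ) - A k ℓ * (cm ℓ : ℤ)) = 0 := by
      rw [Finset.sum_congr rfl fun ℓ _ => hterm ℓ]; exact h0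
    rw [Finset.sum_sub_distrib] at h1
    omega
  have hwP : MvPolynomial.eval w P = 0 := by
    have hcl : YA A ⊆ {x | MvPolynomial.eval x P = 0} := by
      apply Set.sInter_subset_of_mem (t := {x | MvPolynomial.eval x P = 0})
      exact ⟨⟨{P}, by ext x; simp⟩, hvan⟩
    exact hcl hw
  have heq : (∏ j, w j ^ (cp j)) = ∏ j, w j ^ (cm j) := by
    rw [hP] at hwP
    simp only [map_sub, map_prod, map_pow, MvPolynomial.eval_X] at hwP
    linear_combination hwP
  calc ∏ j, w j ^ (c j) = ∏ j, (w j ^ (cp j : ℤ)) / (w j ^ (cm j : ℤ)) := by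
        apply Finset.prod_congr rfl
        intro j _
        rw [← hcd j, zpow_sub₀ (hw0 j)]
    _ = (∏ j, w j ^ (cp j)) / (∏ j, w j ^ (cm j)) := by
        rw [Finset.prod_div_distrib]
        simp [zpow_natCast]
    _ = 1 := by
        rw [heq, div_self]
        exact Finset.prod_ne_zero_iff.mpr fun j _ => pow_ne_zero _ (hw0 j)

lemma cos_eq_exp {z : ℂ} :
    Complex.cos z = (Complex.exp (z * Complex.I) + Complex.exp (-(z * Complex.I))) / 2 := by
  rw [Complex.cos, neg_mul]

/-- Theorem 2.2: the Lissajous variety `ℒ_{A,b}` is the image of `𝒴_{A,b}` under the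
coordinate projection `(x, y) ↦ x`. -/
theorem stmt3 {d n : ℕ} (A : Matrix (Fin d) (Fin n) ℤ) (b : Fin n → ℂ) :
    Lissajous A b = Prod.fst '' YcalAb A b := by
  classical
  ext x
  constructor
  · rintro ⟨y', ⟨xr, hxr, rfl⟩, rfl⟩
    obtain ⟨t, ht⟩ := Submodule.mem_span_range_iff_exists_fun ℂ |>.mp hxr
    set w : Fin n → ℂ := fun ℓ => ∏ k, Complex.exp (Complex.I * t k) ^ (A k ℓ) with hwdef
    set y : Fin n → ℂ := fun ℓ => betaOf b ℓ * w ℓ with hydef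
    have hw0 : ∀ j, w j ≠ 0 := fun j =>
      Finset.prod_ne_zero_iff.mpr fun k _ => zpow_ne_zero _ (Complex.exp_ne_zero _)
    have hy0 : ∀ j, y j ≠ 0 := fun j =>
      mul_ne_zero (Complex.exp_ne_zero _) (hw0 j)
    have hxrj : ∀ j, xr j = ∑ i, t i * (A i j : ℂ) := by
      intro j
      rw [← ht, Finset.sum_apply]
      simp [Pi.smul_apply]
    have hexp : ∀ j, Complex.exp (xr j * Complex.I) = w j := by
      intro j
      rw [hxrj j]
      have harg : (∑ i, t i * (A i j : ℂ)) * Complex.I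
          = ∑ i, (A i j : ℂ) * (Complex.I * t i) := by
        rw [Finset.sum_mul]
        congr 1; funext i; ring
      rw [harg, Complex.exp_sum]
      apply Finset.prod_congr rfl
      intro k _
      exact Complex.exp_int_mul _ _
    refine ⟨((fun j => Complex.cos ((xr - ((Real.pi : ℂ) / 2) • b) j)), y),
      ⟨hy0, ⟨w, torusImage_subset_YA A ⟨(fun k => Complex.exp (Complex.I * t k)),
        fun k => Complex.exp_ne_zero _, rfl⟩, hydef.symm⟩, ?_⟩, rfl⟩
    intro j
    show Complex.cos ((xr - ((Real.pi : ℂ) / 2) • b) j) = (y j + (y j)⁻¹) / 2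
    have hsub : (xr - ((Real.pi : ℂ) / 2) • b) j = xr j - ((Real.pi : ℂ) / 2) * b j := by
      simp [Pi.sub_apply]
    rw [hsub, cos_eq_exp]
    have harg2 : (xr j - ((Real.pi : ℂ) / 2) * b j) * Complex.I
        = xr j * Complex.I + (-(Complex.I * b j * ((Real.pi : ℂ) / 2))) := by ring
    have he : Complex.exp ((xr j - ((Real.pi : ℂ) / 2) * b j) * Complex.I) = y j := by
      rw [harg2, Complex.exp_add, hexp j, hydef]
      exact mul_comm _ _
    rw [he, Complex.exp_neg, he]
  · rintro ⟨⟨x', y⟩, ⟨hy0, ⟨w, hwYA, hyw⟩, hx⟩, rfl⟩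
    have hyw' : ∀ ℓ, y ℓ = betaOf b ℓ * w ℓ := fun ℓ => (congrFun hyw ℓ).symm
    have hw0 : ∀ j, w j ≠ 0 := by
      intro j hj
      apply hy0 j
      show y j = 0
      rw [hyw' j, hj, mul_zero]
    set v : Fin n → ℂ := fun j => Complex.log (w j) with hvdef
    have hv : ∀ j, Complex.exp (v j) = w j := fun j => Complex.exp_log (hw0 j)
    set N : Submodule ℤ (Fin n → ℤ) := LinearMap.ker (Matrix.mulVecLin A) with hN
    have hmemN : ∀ c : Fin n → ℤ, c ∈ N ↔ A.mulVec c = 0 := by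
      intro c; rw [hN, LinearMap.mem_ker, Matrix.mulVecLin_apply]
    set M : N →ₗ[ℤ] ℂ := (pairWith v).comp N.subtype with hM
    have hMmul : ∀ c : N, M c ∈ AddSubgroup.zmultiples
        (2 * (Real.pi : ℂ) * Complex.I) := by
      rintro ⟨c, hc⟩
      have hone : ∏ j, w j ^ (c j) = 1 :=
        prod_zpow_eq_one A w hwYA hw0 c ((hmemN c).mp hc)
      have : Complex.exp (∑ j, (c j : ℂ) * v j) = 1 := by
        rw [Complex.exp_sum]
        rw [Finset.prod_congr rfl fun j _ => Complex.exp_int_mul (v j) (c j)]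
        rw [Finset.prod_congr rfl fun j _ => by rw [hv j]]
        exact hone
      obtain ⟨m, hm⟩ := Complex.exp_eq_one_iff.mp this
      rw [AddSubgroup.mem_zmultiples_iff]
      refine ⟨m, ?_⟩
      rw [zsmul_eq_mul, hM]
      simp only [LinearMap.comp_apply, Submodule.coe_subtype, pairWith_apply]
      rw [hm]
    have hsat : ∀ (a : ℤ) (z : Fin n → ℤ), a ≠ 0 → a • z ∈ N → z ∈ N := by
      intro a z ha hz
      rw [hN, LinearMap.mem_ker] at hz ⊢
      rw [map_smul] at hz
      rcases smul_eq_zero.mp hz with h | h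
      · exact absurd h ha
      · exact h
    obtain ⟨G, hG, hGz⟩ := exists_extend N M
    have hGmul := hGz _ hsat hMmul
    set u : Fin n → ℂ := fun j => v j - G (Pi.single j 1) with hudef
    have hexpu : ∀ j, Complex.exp (u j) = w j := by
      intro j
      obtain ⟨m, hm⟩ := AddSubgroup.mem_zmultiples_iff.mp (hGmul (Pi.single j 1))
      rw [hudef]
      rw [Complex.exp_sub, hv j, ← hm, zsmul_eq_mul,
        Complex.exp_int_mul_two_pi_mul_I, div_one]
    have hperp : ∀ c : Fin n → ℤ, A.mulVec c = 0 → ∑ j, (c j : ℂ) * u j = 0 := by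
      intro c hc
      have hcN : c ∈ N := (hmemN c).mpr hc
      have hsplit : ∑ j, (c j : ℂ) * u j
          = (∑ j, (c j : ℂ) * v j) - ∑ j, (c j : ℂ) * G (Pi.single j 1) := by
        rw [← Finset.sum_sub_distrib]
        congr 1; funext j
        rw [hudef, mul_sub]
      rw [hsplit, ← linearMap_eq_sum_single]
      have : G c = M ⟨c, hcN⟩ := hG ⟨c, hcN⟩
      rw [this, hM]
      simp only [LinearMap.comp_apply, Submodule.coe_subtype, pairWith_apply]
      ring
    have humem : u ∈ rowSpanC A := mem_rowSpan_of_perp A u hperp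
    set xh : Fin n → ℂ := (-Complex.I) • u with hxh
    have hxhmem : xh ∈ rowSpanC A := Submodule.smul_mem _ _ humem
    refine ⟨xh - ((Real.pi : ℂ) / 2) • b, ⟨xh, hxhmem, rfl⟩, ?_⟩
    funext j
    show Complex.cos ((xh - ((Real.pi : ℂ) / 2) • b) j) = x' j
    have hsub : (xh - ((Real.pi : ℂ) / 2) • b) j
        = -Complex.I * u j - ((Real.pi : ℂ) / 2) * b j := by
      simp [hxh, Pi.sub_apply]
    rw [hsub, cos_eq_exp]
    have harg : (-Complex.I * u j - ((Real.pi : ℂ) / 2) * b j) * Complex.I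
        = u j + (-(Complex.I * b j * ((Real.pi : ℂ) / 2))) := by
      linear_combination (-(u j)) * Complex.I_sq
    have he : Complex.exp ((-Complex.I * u j - ((Real.pi : ℂ) / 2) * b j) * Complex.I)
        = y j := by
      rw [harg, Complex.exp_add, hexpu j, hyw' j]
      exact mul_comm _ _
    rw [he, Complex.exp_neg, he]
    exact (hx j).symm
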